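/- arXiv:1305.2438 — 3 statements merged into one kernel-verified Lean document; each statement's English description precedes it below -/
import Mathlib

section
/- Every k-core (a partition with no cell of hook length equal to k) is a k-shape: both its k-row shape and k-column shape are partitions (weakly decreasing sequences). -/
open Classical

structure YPartition where
  parts : ℕ → ℕ
  antitone' : ∀ i j : ℕ, i ≤ j → parts j ≤ parts i
  finite' : ∃ N : ℕ, ∀ i : ℕ, N ≤ i → parts i = 0

namespace YPartition

def empty : YPartition :=
  ⟨fun _ => 0, fun _ _ _ => le_rfl, ⟨0, fun _ _ => rfl⟩⟩

def Mem (lam : YPartition) (b : ℕ × ℕ) : Prop := b.2 < lam.parts b.1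

def Le (lam mu : YPartition) : Prop := ∀ i : ℕ, lam.parts i ≤ mu.parts i

noncomputable def conj (lam : YPartition) (j : ℕ) : ℕ :=
  @Nat.find (fun i => lam.parts i ≤ j) (Classical.decPred _)
    (by
      obtain ⟨N, hN⟩ := lam.finite'
      exact ⟨N, show lam.parts N ≤ j by rw [hN N le_rfl]; exact Nat.zero_le j⟩)

noncomputable def hook (lam : YPartition) (i j : ℕ) : ℕ :=
  (lam.parts i - j) + (lam.conj j - i) - 1

noncomputable def rsk (k : ℕ) (lam : YPartition) (i : ℕ) : ℕ :=
  Nat.card {j : ℕ | lam.Mem (i, j) ∧ lam.hook i j ≤ k}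

noncomputable def csk (k : ℕ) (lam : YPartition) (j : ℕ) : ℕ :=
  Nat.card {i : ℕ | lam.Mem (i, j) ∧ lam.hook i j ≤ k}

def IsKShape (k : ℕ) (lam : YPartition) : Prop :=
  (∀ i i' : ℕ, i ≤ i' → rsk k lam i' ≤ rsk k lam i) ∧
  (∀ j j' : ℕ, j ≤ j' → csk k lam j' ≤ csk k lam j)

def IsCore (p : ℕ) (lam : YPartition) : Prop :=
  ∀ i j : ℕ, lam.Mem (i, j) → lam.hook i j ≠ p

noncomputable def psize (lam : YPartition) : ℕ := Nat.card {b : ℕ × ℕ | lam.Mem b}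

noncomputable def intSize (k : ℕ) (lam : YPartition) : ℕ :=
  Nat.card {b : ℕ × ℕ | lam.Mem b ∧ k < lam.hook b.1 b.2}

noncomputable def bdrySize (k : ℕ) (lam : YPartition) : ℕ :=
  Nat.card {b : ℕ × ℕ | lam.Mem b ∧ lam.hook b.1 b.2 ≤ k}

noncomputable def union (lam mu : YPartition) : YPartition :=
  ⟨fun i => max (lam.parts i) (mu.parts i),
   fun i j h => max_le_max (lam.antitone' i j h) (mu.antitone' i j h),
   by
     obtain ⟨N, hN⟩ := lam.finite'
     obtain ⟨M, hM⟩ := mu.finite'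
     refine ⟨max N M, fun i hi => ?_⟩
     show max (lam.parts i) (mu.parts i) = 0
     rw [hN i (le_trans (le_max_left _ _) hi), hM i (le_trans (le_max_right _ _) hi)]
     simp⟩

end YPartition

open YPartition

def diagIdx (b : ℕ × ℕ) : ℤ := (b.2 : ℤ) - (b.1 : ℤ)

def cellDist (b b' : ℕ × ℕ) : ℕ := (diagIdx b - diagIdx b').natAbs

def Contiguous (k : ℕ) (b b' : ℕ × ℕ) : Prop :=
  cellDist b b' = k ∨ cellDist b b' = k + 1

def HasAddable (lam : YPartition) (i : ℕ) : Prop :=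
  i = 0 ∨ lam.parts i < lam.parts (i - 1)

def addCorner (lam : YPartition) (i : ℕ) : ℕ × ℕ := (i, lam.parts i)

def IsAddableCell (lam : YPartition) (b : ℕ × ℕ) : Prop :=
  HasAddable lam b.1 ∧ b.2 = lam.parts b.1

def HasRemovable (lam : YPartition) (i : ℕ) : Prop := lam.parts (i + 1) < lam.parts i

def remCorner (lam : YPartition) (i : ℕ) : ℕ × ℕ := (i, lam.parts i - 1)

def KConnectedBelow (k : ℕ) (lam : YPartition) (r r' : ℕ) : Prop :=
  r' < r ∧ HasAddable lam r ∧ HasAddable lam r' ∧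
    cellDist (addCorner lam r) (addCorner lam r') ≤ k + 1 ∧
    ∀ r'' : ℕ, r'' < r' → HasAddable lam r'' →
      ¬ cellDist (addCorner lam r) (addCorner lam r'') ≤ k + 1

def ContigConnected (k : ℕ) (lam : YPartition) (r r' : ℕ) : Prop :=
  KConnectedBelow k lam r r' ∧ Contiguous k (addCorner lam r) (addCorner lam r')

inductive InChain (k : ℕ) (lam : YPartition) (r : ℕ) : ℕ → Prop
  | refl : InChain k lam r r
  | step {s s' : ℕ} : InChain k lam r s → KConnectedBelow k lam s s' → InChain k lam r s'

noncomputable def iCC (k : ℕ) (lam : YPartition) (top bot : ℕ) (ct cb : Bool) : ℕ :=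
  Nat.card {s : ℕ | InChain k lam top s ∧ (if cb then bot ≤ s else bot < s) ∧
    (ct = true ∨ s ≠ top)}

noncomputable def rowUp (lam mu : YPartition) : ℕ := sSup {i : ℕ | lam.parts i < mu.parts i}

noncomputable def rowDown (lam mu : YPartition) : ℕ := sInf {i : ℕ | lam.parts i < mu.parts i}

noncomputable def chargeStepVal (k : ℕ) (sh : YPartition) (r r' : ℕ) : ℤ :=
  if r' ≤ r then (iCC k sh r r' true false : ℤ) else -(iCC k sh r' r false true : ℤ)

noncomputable def cochargeStepVal (k : ℕ) (sh : YPartition) (r r' : ℕ) : ℤ :=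
  if r' < r then -(iCC k sh r r' false false : ℤ) else (iCC k sh r' r true true : ℤ)

noncomputable def chargeLet (k : ℕ) (T : ℕ → YPartition) : ℕ → ℤ
  | 0 => 0
  | 1 => 0
  | n + 2 =>
    chargeLet k T (n + 1) +
      chargeStepVal k (T (n + 1)) (rowUp (T n) (T (n + 1)) + 1)
        (rowUp (T (n + 1)) (T (n + 2)))

noncomputable def cochargeLet (k : ℕ) (T : ℕ → YPartition) : ℕ → ℤ
  | 0 => 0
  | 1 => 0
  | n + 2 =>
    cochargeLet k T (n + 1) +
      cochargeStepVal k (T (n + 1)) (rowDown (T n) (T (n + 1)) + 1)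
        (rowDown (T (n + 1)) (T (n + 2)))

noncomputable def chargeTab (k : ℕ) (T : ℕ → YPartition) (N : ℕ) : ℤ :=
  ∑ n ∈ Finset.range N, chargeLet k T (n + 1)

noncomputable def cochargeTab (k : ℕ) (T : ℕ → YPartition) (N : ℕ) : ℤ :=
  ∑ n ∈ Finset.range N, cochargeLet k T (n + 1)

def skewSet (lam mu : YPartition) : Set (ℕ × ℕ) := {b | mu.Mem b ∧ ¬ lam.Mem b}

def IsStringOf (k : ℕ) (lam mu : YPartition) (ℓ : ℕ) (a : ℕ → ℕ × ℕ) : Prop :=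
  YPartition.Le lam mu ∧
  (∀ b : ℕ × ℕ, b ∈ skewSet lam mu ↔ ∃ i < ℓ, a i = b) ∧
  (∀ i j : ℕ, i < ℓ → j < ℓ → a i = a j → i = j) ∧
  (∀ i : ℕ, i + 1 < ℓ → (a (i + 1)).1 < (a i).1 ∧ Contiguous k (a i) (a (i + 1)))

def IsRowTypeStringOf (k : ℕ) (lam mu : YPartition) (ℓ : ℕ) (a : ℕ → ℕ × ℕ) : Prop :=
  IsStringOf k lam mu ℓ a ∧ ∀ i : ℕ, rsk k mu i = rsk k lam i

def IsColTypeStringOf (k : ℕ) (lam mu : YPartition) (ℓ : ℕ) (a : ℕ → ℕ × ℕ) : Prop :=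
  IsStringOf k lam mu ℓ a ∧ ∀ j : ℕ, csk k mu j = csk k lam j

def TranslateBy (v : ℤ × ℤ) (b b' : ℕ × ℕ) : Prop :=
  (b'.1 : ℤ) = (b.1 : ℤ) + v.1 ∧ (b'.2 : ℤ) = (b.2 : ℤ) + v.2

def IsRowMove (k ℓ r : ℕ) (lam mu : YPartition) : Prop :=
  1 ≤ r ∧ 1 ≤ ℓ ∧ IsKShape k lam ∧ IsKShape k mu ∧
  ∃ (c : ℕ → YPartition) (a : ℕ → ℕ → ℕ × ℕ),
    c 0 = lam ∧ c r = mu ∧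
    (∀ i < r, IsRowTypeStringOf k (c i) (c (i + 1)) ℓ (a i)) ∧
    (∀ i < r, ∃ v : ℤ × ℤ, ∀ t < ℓ, TranslateBy v (a 0 t) (a i t)) ∧
    (∀ i : ℕ, i + 1 < r → (a (i + 1) 0).2 = (a i 0).2 + 1)

def IsColMove (k ℓ r : ℕ) (lam mu : YPartition) : Prop :=
  1 ≤ r ∧ 1 ≤ ℓ ∧ IsKShape k lam ∧ IsKShape k mu ∧
  ∃ (c : ℕ → YPartition) (a : ℕ → ℕ → ℕ × ℕ),
    c 0 = lam ∧ c r = mu ∧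
    (∀ i < r, IsColTypeStringOf k (c i) (c (i + 1)) ℓ (a i)) ∧
    (∀ i < r, ∃ v : ℤ × ℤ, ∀ t < ℓ, TranslateBy v (a 0 t) (a i t)) ∧
    (∀ i : ℕ, i + 1 < r → (a (i + 1) (ℓ - 1)).1 = (a i (ℓ - 1)).1 + 1)

def IsMoveOf (k ℓ r : ℕ) (isRow : Bool) (lam mu : YPartition) : Prop :=
  if isRow then IsRowMove k ℓ r lam mu else IsColMove k ℓ r lam mu

def MoveRel (k : ℕ) (lam mu : YPartition) : Prop :=
  ∃ ℓ r : ℕ, IsRowMove k ℓ r lam mu ∨ IsColMove k ℓ r lam mu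

def IsCover (k : ℕ) (lam mu : YPartition) : Prop :=
  IsKShape k lam ∧ IsKShape k mu ∧
  ∃ (ℓ : ℕ) (a : ℕ → ℕ × ℕ), 1 ≤ ℓ ∧ IsStringOf k lam mu ℓ a ∧
    (∃ i : ℕ, rsk k lam i < rsk k mu i) ∧ (∃ j : ℕ, csk k lam j < csk k mu j)

noncomputable def topCellC (lam mu : YPartition) : ℕ × ℕ :=
  (rowUp lam mu, lam.parts (rowUp lam mu))

noncomputable def botCellC (lam mu : YPartition) : ℕ × ℕ :=
  (rowDown lam mu, lam.parts (rowDown lam mu))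

def CanContinueBelow (k : ℕ) (lam mu : YPartition) : Prop :=
  ∃ i : ℕ, HasAddable lam i ∧ i < rowDown lam mu ∧
    Contiguous k (botCellC lam mu) (addCorner lam i)

def CanContinueAbove (k : ℕ) (lam mu : YPartition) : Prop :=
  ∃ i : ℕ, HasAddable lam i ∧ rowUp lam mu < i ∧
    Contiguous k (addCorner lam i) (topCellC lam mu)

def RevContinueBelow (k : ℕ) (lam mu : YPartition) : Prop :=
  ∃ i : ℕ, HasRemovable mu i ∧ i < rowDown lam mu ∧
    Contiguous k (botCellC lam mu) (remCorner mu i)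

def RevContinueAbove (k : ℕ) (lam mu : YPartition) : Prop :=
  ∃ i : ℕ, HasRemovable mu i ∧ rowUp lam mu < i ∧
    Contiguous k (remCorner mu i) (topCellC lam mu)

def IsMaximalCover (k : ℕ) (lam mu : YPartition) : Prop :=
  IsCover k lam mu ∧ ¬ CanContinueAbove k lam mu ∧ ¬ CanContinueBelow k lam mu

def IsReverseMaximalCover (k : ℕ) (lam mu : YPartition) : Prop :=
  IsCover k lam mu ∧ ¬ RevContinueAbove k lam mu ∧ ¬ RevContinueBelow k lam mu

def StdKShapeTableau (k N : ℕ) (T : ℕ → YPartition) : Prop :=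
  T 0 = YPartition.empty ∧ ∀ n < N, IsCover k (T n) (T (n + 1))

def HorizStrip (lam mu : YPartition) : Prop :=
  YPartition.Le lam mu ∧ ∀ j : ℕ, mu.conj j ≤ lam.conj j + 1

def VertStrip (lam mu : YPartition) : Prop :=
  YPartition.Le lam mu ∧ ∀ i : ℕ, mu.parts i ≤ lam.parts i + 1

def IsStdKTableau (k N : ℕ) (T : ℕ → YPartition) : Prop :=
  T 0 = YPartition.empty ∧ (∀ n ≤ N, IsCore (k + 1) (T n)) ∧
  ∀ n < N, HorizStrip (T n) (T (n + 1)) ∧ VertStrip (T n) (T (n + 1)) ∧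
    bdrySize k (T (n + 1)) = bdrySize k (T n) + 1

def cellResidue (k : ℕ) (b : ℕ × ℕ) : ZMod (k + 1) :=
  (b.2 : ZMod (k + 1)) - (b.1 : ZMod (k + 1))

def GroundPos (lam : YPartition) (i j : ℕ) : Prop :=
  1 ≤ i ∧ lam.parts i ≤ j ∧ j < lam.parts (i - 1)

noncomputable def diagCount (k : ℕ) (e : ZMod (k + 1)) (b b' : ℕ × ℕ) : ℕ :=
  Nat.card {d : ℤ | min (diagIdx b) (diagIdx b') < d ∧
    d < max (diagIdx b) (diagIdx b') ∧ (d : ZMod (k + 1)) = e}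

noncomputable def upCell (lam mu : YPartition) : ℕ × ℕ :=
  (rowUp lam mu, lam.parts (rowUp lam mu))

def shiftU (S : Set (ℕ × ℕ)) : Set (ℕ × ℕ) := (fun b => (b.1 + 1, b.2)) '' S

/-- Abstract hook function for a partition given by row function `f` and conjugate `g`. -/
def Hk (f g : ℕ → ℕ) (r j : ℕ) : ℕ := (f r - j) + (g j - r) - 1

/-- Key lemma: in a k-core (abstractly), the number of cells with hook ≤ k in
consecutive rows is weakly decreasing. -/
lemma kshape_key (k : ℕ) (hk : 1 ≤ k) (f g : ℕ → ℕ)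
    (hf : ∀ i j : ℕ, i ≤ j → f j ≤ f i)
    (hfg : ∀ i j : ℕ, j < f i ↔ i < g j)
    (hcore : ∀ i j : ℕ, j < f i → Hk f g i j ≠ k) (i : ℕ) :
    Nat.card {j : ℕ | j < f (i + 1) ∧ Hk f g (i + 1) j ≤ k} ≤
      Nat.card {j : ℕ | j < f i ∧ Hk f g i j ≤ k} := by
  -- g is antitone
  have hg : ∀ j j' : ℕ, j ≤ j' → g j' ≤ g j := by
    intro j j' hjj
    by_contra hc
    push_neg at hc
    have h1 : j' < f (g j) := (hfg (g j) j').mpr hc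
    have h2 : j < f (g j) := lt_of_le_of_lt hjj h1
    exact lt_irrefl _ ((hfg (g j) j).mp h2)
  -- hooks strictly decrease along a row
  have hstep : ∀ r j : ℕ, j + 1 < f r → Hk f g r (j + 1) + 1 ≤ Hk f g r j := by
    intro r j hj
    have h1 := hg j (j + 1) (Nat.le_succ j)
    simp only [Hk]
    omega
  have hchain : ∀ r j m : ℕ, j + m < f r → Hk f g r (j + m) + m ≤ Hk f g r j := by
    intro r j m
    induction m with
    | zero => intro _; simp
    | succ n ih =>
      intro hlt
      have h1 : j + n < f r := by omega
      have h2 := hstep r (j + n) (by omega)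
      have h3 := ih h1
      have h4 : j + (n + 1) = (j + n) + 1 := by omega
      rw [h4]
      omega
  -- cross-row relation
  have hcross : ∀ r j : ℕ, j < f (r + 1) →
      Hk f g r j = Hk f g (r + 1) j + 1 + (f r - f (r + 1)) := by
    intro r j hj
    have h1 : f (r + 1) ≤ f r := hf r (r + 1) (Nat.le_succ r)
    have h2 : r + 1 < g j := (hfg (r + 1) j).mp hj
    simp only [Hk]
    omega
  -- threshold of the boundary in each row
  have hex : ∀ r : ℕ, ∃ j : ℕ, f r ≤ j ∨ Hk f g r j ≤ k := fun r => ⟨f r, Or.inl le_rfl⟩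
  have hTle : ∀ r : ℕ, Nat.find (hex r) ≤ f r := fun r => Nat.find_le (Or.inl le_rfl)
  have hTlt : ∀ r j : ℕ, j < Nat.find (hex r) → j < f r ∧ k < Hk f g r j := by
    intro r j hj
    have hmin := Nat.find_min (hex r) hj
    push_neg at hmin
    exact hmin
  have hset : ∀ r : ℕ, {j : ℕ | j < f r ∧ Hk f g r j ≤ k}
      = Set.Ico (Nat.find (hex r)) (f r) := by
    intro r
    ext j
    simp only [Set.mem_setOf_eq, Set.mem_Ico]
    constructor
    · rintro ⟨h1, h2⟩
      refine ⟨?_, h1⟩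
      by_contra hc
      push_neg at hc
      exact absurd h2 (not_le.mpr (hTlt r j hc).2)
    · rintro ⟨h1, h2⟩
      refine ⟨h2, ?_⟩
      have hspec := Nat.find_spec (hex r)
      have hTr : Hk f g r (Nat.find (hex r)) ≤ k := by
        rcases hspec with hs | hs
        · omega
        · exact hs
      have hch := hchain r (Nat.find (hex r)) (j - Nat.find (hex r)) (by omega)
      rw [show Nat.find (hex r) + (j - Nat.find (hex r)) = j by omega] at hch
      omega
  have hcard : ∀ r : ℕ, Nat.card {j : ℕ | j < f r ∧ Hk f g r j ≤ k}
      = f r - Nat.find (hex r) := by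
    intro r
    rw [hset r, Nat.card_eq_card_toFinset]
    simp
  rw [hcard i, hcard (i + 1)]
  by_contra hcon
  push_neg at hcon
  have hba : f (i + 1) ≤ f i := hf i (i + 1) (Nat.le_succ i)
  have hti := hTle i
  have hti1 := hTle (i + 1)
  have htb : Nat.find (hex (i + 1)) < f (i + 1) := by omega
  set J := Nat.find (hex i) - (f i - f (i + 1)) - 1 with hJ
  have hJb : J < f (i + 1) := by omega
  have htJ : Nat.find (hex (i + 1)) ≤ J := by omega
  -- upper bound on hook at J in row i
  have h1 : Hk f g (i + 1) (Nat.find (hex (i + 1))) ≤ k := by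
    rcases Nat.find_spec (hex (i + 1)) with hs | hs
    · omega
    · exact hs
  have h2 : Hk f g (i + 1) J ≤ k := by
    have hch := hchain (i + 1) (Nat.find (hex (i + 1))) (J - Nat.find (hex (i + 1)))
      (by omega)
    rw [show Nat.find (hex (i + 1)) + (J - Nat.find (hex (i + 1))) = J by omega] at hch
    omega
  have h3 : Hk f g (i + 1) J ≠ k := hcore (i + 1) J hJb
  have h4 : Hk f g i J = Hk f g (i + 1) J + 1 + (f i - f (i + 1)) := hcross i J hJb
  -- lower bound on hook at J in row i
  have h5 := hTlt i (Nat.find (hex i) - 1) (by omega)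
  have h6 := hchain i J (Nat.find (hex i) - 1 - J) (by omega)
  rw [show J + (Nat.find (hex i) - 1 - J) = Nat.find (hex i) - 1 by omega] at h6
  omega

/-- Every k-core is a k-shape. -/
theorem kcore_is_kshape (k : ℕ) (hk : 2 ≤ k) (lam : YPartition)
    (h : IsCore k lam) : IsKShape k lam := by
  have hconjex : ∀ j : ℕ, ∃ i : ℕ, lam.parts i ≤ j := by
    intro j
    obtain ⟨N, hN⟩ := lam.finite'
    exact ⟨N, by rw [hN N le_rfl]; exact Nat.zero_le j⟩
  have hconj_eq : ∀ j : ℕ, lam.conj j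
      = @Nat.find (fun i => lam.parts i ≤ j) (Classical.decPred _) (hconjex j) :=
    fun j => rfl
  have hconj_spec : ∀ j : ℕ, lam.parts (lam.conj j) ≤ j := by
    intro j
    rw [hconj_eq j]
    exact @Nat.find_spec (fun i => lam.parts i ≤ j) (Classical.decPred _) (hconjex j)
  have hconj : ∀ i j : ℕ, j < lam.parts i ↔ i < lam.conj j := by
    intro i j
    constructor
    · intro hij
      by_contra hc
      push_neg at hc
      have h1 := lam.antitone' (lam.conj j) i hc
      have h2 := hconj_spec j
      omega
    · intro hij
      rw [hconj_eq j] at hij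
      have := @Nat.find_min (fun i => lam.parts i ≤ j) (Classical.decPred _)
        (hconjex j) i hij
      omega
  have hconjanti : ∀ j j' : ℕ, j ≤ j' → lam.conj j' ≤ lam.conj j := by
    intro j j' hjj
    by_contra hc
    push_neg at hc
    have h1 : j' < lam.parts (lam.conj j) := (hconj _ _).mpr hc
    have h2 : j < lam.parts (lam.conj j) := lt_of_le_of_lt hjj h1
    exact lt_irrefl _ ((hconj (lam.conj j) j).mp h2)
  constructor
  · -- rows
    have key : ∀ i : ℕ, rsk k lam (i + 1) ≤ rsk k lam i := by
      intro i
      have hcore : ∀ i j : ℕ, j < lam.parts i → Hk lam.parts lam.conj i j ≠ k := by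
        intro i j hij
        have hne := h i j hij
        simp only [YPartition.hook] at hne
        simp only [Hk]
        omega
      have hmain := kshape_key k (by omega) lam.parts lam.conj lam.antitone' hconj hcore i
      have hsets : ∀ ii : ℕ, {j : ℕ | lam.Mem (ii, j) ∧ lam.hook ii j ≤ k}
          = {j : ℕ | j < lam.parts ii ∧ Hk lam.parts lam.conj ii j ≤ k} := by
        intro ii
        ext j
        simp only [Set.mem_setOf_eq, YPartition.Mem, YPartition.hook, Hk]
      have e1 : ∀ ii : ℕ, rsk k lam ii
          = Nat.card {j : ℕ | j < lam.parts ii ∧ Hk lam.parts lam.conj ii j ≤ k} := by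
        intro ii
        simp only [YPartition.rsk]
        exact congrArg (fun s : Set ℕ => Nat.card ↑s) (hsets ii)
      rw [e1 i, e1 (i + 1)]
      exact hmain
    exact fun i i' hii => antitone_nat_of_succ_le key hii
  · -- columns
    have key : ∀ j : ℕ, csk k lam (j + 1) ≤ csk k lam j := by
      intro j
      have hfg : ∀ j i : ℕ, i < lam.conj j ↔ j < lam.parts i :=
        fun j i => (hconj i j).symm
      have hcore : ∀ j i : ℕ, i < lam.conj j → Hk lam.conj lam.parts j i ≠ k := by
        intro j i hij
        have hm : j < lam.parts i := (hconj i j).mpr hij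
        have hne := h i j hm
        simp only [YPartition.hook] at hne
        simp only [Hk]
        omega
      have hmain := kshape_key k (by omega) lam.conj lam.parts hconjanti hfg hcore j
      have hsets : ∀ jj : ℕ, {i : ℕ | lam.Mem (i, jj) ∧ lam.hook i jj ≤ k}
          = {i : ℕ | i < lam.conj jj ∧ Hk lam.conj lam.parts jj i ≤ k} := by
        intro jj
        ext i
        simp only [Set.mem_setOf_eq, YPartition.Mem, YPartition.hook, Hk]
        have hc := hconj i jj
        constructor
        · rintro ⟨h1, h2⟩
          exact ⟨hc.mp h1, by omega⟩
        · rintro ⟨h1, h2⟩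
          exact ⟨hc.mpr h1, by omega⟩
      have e1 : ∀ jj : ℕ, csk k lam jj
          = Nat.card {i : ℕ | i < lam.conj jj ∧ Hk lam.conj lam.parts jj i ≤ k} := by
        intro jj
        simp only [YPartition.csk]
        exact congrArg (fun s : Set ℕ => Nat.card ↑s) (hsets jj)
      rw [e1 j, e1 (j + 1)]
      exact hmain
    exact fun j j' hjj => antitone_nat_of_succ_le key hjj
end

section
/- Let λ be a k-shape and r₁ > r₂ be two k-connected rows of λ. If s₁ is a row of λ with an addable corner and s₁ ≤ r₁, then the k-connected row s₂ below s₁ satisfies s₂ ≤ r₂. -/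
open Classical

open YPartition

/-- rows weakly below k-connected rows connect weakly below. -/
theorem connected_row_below (k : ℕ) (hk : 2 ≤ k) (lam : YPartition)
    (hsh : IsKShape k lam) (r₁ r₂ : ℕ) (h12 : KConnectedBelow k lam r₁ r₂)
    (s₁ s₂ : ℕ) (hs : s₁ ≤ r₁) (hconn : KConnectedBelow k lam s₁ s₂) :
    s₂ ≤ r₂ := by
  by_contra h
  push_neg at h
  obtain ⟨hs2s1, hadds1, _, _, hmin⟩ := hconn
  obtain ⟨hr21, _, haddr2, hdistr, _⟩ := h12
  have hr2s1 : r₂ < s₁ := lt_trans h hs2s1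
  apply hmin r₂ h haddr2
  have h1 : lam.parts r₁ ≤ lam.parts s₁ := lam.antitone' s₁ r₁ hs
  have h2 : lam.parts s₁ ≤ lam.parts r₂ := lam.antitone' r₂ s₁ hr2s1.le
  simp only [cellDist, addCorner, diagIdx] at hdistr ⊢
  omega
end

section
/- Let T be a standard k-shape tableau and suppose the letter n+1 occupies ℓ+1 cells forming a cover c_{n+1}. Let cocharge'(n+1) be the cocharge of letter n+1 computed as if (n+1)↓ were located at the position of (n+1)↑. Then cocharge'(n+1) − cocharge(n+1) = ℓ = |c_{n+1}| − 1. -/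
open Classical

open YPartition

namespace KShapeAux

open YPartition

/-- diagonal of the addable corner of row `i`, as an integer -/
def cdiag (lam : YPartition) (i : ℕ) : ℤ := (lam.parts i : ℤ) - i

lemma diagIdx_addCorner (lam : YPartition) (i : ℕ) :
    diagIdx (addCorner lam i) = cdiag lam i := rfl

lemma parts_lt_of_addable {lam : YPartition} {i i' : ℕ}
    (h : HasAddable lam i) (hlt : i' < i) : lam.parts i < lam.parts i' := by
  rcases h with h0 | h
  · omega
  · exact lt_of_lt_of_le h (lam.antitone' i' (i - 1) (by omega))

lemma cdiag_add_two_le {lam : YPartition} {i i' : ℕ}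
    (h : HasAddable lam i) (_h' : HasAddable lam i') (hlt : i' < i) :
    cdiag lam i + 2 ≤ cdiag lam i' := by
  have h1 : lam.parts i < lam.parts i' := parts_lt_of_addable h hlt
  unfold cdiag
  have : (lam.parts i : ℤ) + 1 ≤ (lam.parts i' : ℤ) := by exact_mod_cast h1
  omega

lemma cellDist_corner_eq {lam : YPartition} {i i' : ℕ}
    (h : HasAddable lam i) (h' : HasAddable lam i') (hlt : i' < i) :
    (cellDist (addCorner lam i) (addCorner lam i') : ℤ) =
      cdiag lam i' - cdiag lam i := by
  have := cdiag_add_two_le h h' hlt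
  unfold cellDist
  rw [diagIdx_addCorner, diagIdx_addCorner]
  omega

/-- KConnectedBelow successors are unique. -/
lemma kcb_unique {k : ℕ} {lam : YPartition} {s a b : ℕ}
    (ha : KConnectedBelow k lam s a) (hb : KConnectedBelow k lam s b) : a = b := by
  by_contra hne
  rcases Nat.lt_or_ge a b with h | h
  · exact hb.2.2.2.2 a h ha.2.2.1 ha.2.2.2.1
  · have : b < a := by omega
    exact ha.2.2.2.2 b this hb.2.2.1 hb.2.2.2.1

lemma inChain_le {k : ℕ} {lam : YPartition} {t s : ℕ}
    (h : InChain k lam t s) : s ≤ t := by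
  induction h with
  | refl => exact le_rfl
  | step _ hkcb ih => exact le_trans (le_of_lt hkcb.1) ih

lemma inChain_trans {k : ℕ} {lam : YPartition} {a b c : ℕ}
    (h1 : InChain k lam a b) (h2 : InChain k lam b c) : InChain k lam a c := by
  induction h2 with
  | refl => exact h1
  | step _ hkcb ih => exact InChain.step ih hkcb

lemma inChain_first {k : ℕ} {lam : YPartition} {t s : ℕ}
    (h : InChain k lam t s) :
    s = t ∨ ∃ z, KConnectedBelow k lam t z ∧ InChain k lam z s := by
  induction h with
  | refl => exact Or.inl rfl
  | @step p q hp hkcb ih =>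
    rcases ih with rfl | ⟨z, hz, hchain⟩
    · exact Or.inr ⟨q, hkcb, InChain.refl⟩
    · exact Or.inr ⟨z, hz, InChain.step hchain hkcb⟩

lemma inChain_total {k : ℕ} {lam : YPartition} {t s s' : ℕ}
    (h : InChain k lam t s) (h' : InChain k lam t s') :
    InChain k lam s s' ∨ InChain k lam s' s := by
  induction h' with
  | refl => exact Or.inr h
  | @step p q hp hkcb ih =>
    rcases ih with hc | hc
    · -- InChain s p, so InChain s q
      exact Or.inl (InChain.step hc hkcb)
    · -- InChain p s
      rcases inChain_first hc with rfl | ⟨z, hz, hchain⟩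
      · exact Or.inl (InChain.step InChain.refl hkcb)
      · have : z = q := kcb_unique hz hkcb
        subst this
        exact Or.inr hchain

lemma inChain_of_le {k : ℕ} {lam : YPartition} {t s s' : ℕ}
    (h : InChain k lam t s) (h' : InChain k lam t s') (hle : s' ≤ s) :
    InChain k lam s s' := by
  rcases inChain_total h h' with hc | hc
  · exact hc
  · have := inChain_le hc
    have : s = s' := le_antisymm this hle
    subst this; exact InChain.refl

lemma finite_chain {k : ℕ} {lam : YPartition} (t : ℕ) :
    {s : ℕ | InChain k lam t s}.Finite :=
  (Set.finite_Iic t).subset (fun s hs => inChain_le hs)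

end KShapeAux
namespace KShapeAux

open YPartition

lemma parts_conj_le (lam : YPartition) (j : ℕ) : lam.parts (lam.conj j) ≤ j := by
  unfold YPartition.conj
  exact @Nat.find_spec (fun i => lam.parts i ≤ j) (Classical.decPred _) _

lemma lt_parts_of_lt_conj {lam : YPartition} {i j : ℕ} (h : i < lam.conj j) :
    j < lam.parts i := by
  unfold YPartition.conj at h
  exact Nat.lt_of_not_le (@Nat.find_min (fun i => lam.parts i ≤ j) (Classical.decPred _) _ _ h)

lemma conj_le_of_parts_le {lam : YPartition} {i j : ℕ} (h : lam.parts i ≤ j) :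
    lam.conj j ≤ i := by
  unfold YPartition.conj
  exact @Nat.find_min' (fun i => lam.parts i ≤ j) (Classical.decPred _) _ _ h

lemma lt_conj_of_lt_parts {lam : YPartition} {i j : ℕ} (h : j < lam.parts i) :
    i < lam.conj j := by
  by_contra hc
  have := lam.antitone' (lam.conj j) i (by omega)
  have := parts_conj_le lam j
  omega

/-- rsk as ncard -/
lemma rsk_eq (k : ℕ) (lam : YPartition) (i : ℕ) :
    rsk k lam i = {j : ℕ | lam.Mem (i, j) ∧ lam.hook i j ≤ k}.ncard := by
  rw [rsk, Nat.card_coe_set_eq]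

lemma csk_eq (k : ℕ) (lam : YPartition) (j : ℕ) :
    csk k lam j = {i : ℕ | lam.Mem (i, j) ∧ lam.hook i j ≤ k}.ncard := by
  rw [csk, Nat.card_coe_set_eq]

lemma rsk_set_finite (k : ℕ) (lam : YPartition) (i : ℕ) :
    {j : ℕ | lam.Mem (i, j) ∧ lam.hook i j ≤ k}.Finite :=
  (Set.finite_Iio (lam.parts i)).subset (fun j hj => hj.1)

lemma csk_set_finite (k : ℕ) (lam : YPartition) (j : ℕ) :
    {i : ℕ | lam.Mem (i, j) ∧ lam.hook i j ≤ k}.Finite :=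
  (Set.finite_Iio (lam.conj j)).subset (fun i hi => lt_conj_of_lt_parts hi.1)

/-- Subclaim D: in a k-shape, every addable row `s ≥ 1` has an addable row
below within diagonal distance `k+1`. -/
lemma exists_candidate {k : ℕ} {lam : YPartition} (hk : 1 ≤ k) (hsh : IsKShape k lam)
    {s : ℕ} (hs : HasAddable lam s) (hs1 : 1 ≤ s) :
    ∃ i < s, HasAddable lam i ∧ cdiag lam i ≤ cdiag lam s + (k + 1) := by
  set b := lam.parts s with hb
  set a := lam.parts (s - 1) with ha
  have hba : b < a := by
    rcases hs with h0 | h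
    · omega
    · exact h
  -- i = conj a
  set i := lam.conj a with hi
  have his : i ≤ s - 1 := conj_le_of_parts_le (le_of_eq ha.symm)
  have hpi : lam.parts i = a := by
    have h1 : lam.parts i ≤ a := parts_conj_le lam a
    have h2 : lam.parts (s-1) ≤ lam.parts i := lam.antitone' i (s-1) his
    omega
  have hiadd : HasAddable lam i := by
    rcases Nat.eq_zero_or_pos i with h0 | h0
    · exact Or.inl h0
    · right
      have := lt_parts_of_lt_conj (lam := lam) (i := i - 1) (j := a) (by omega)
      omega
  -- constant parts on [i, s-1]
  have hconst : ∀ i', i ≤ i' → i' ≤ s - 1 → lam.parts i' = a := by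
    intro i' h1 h2
    have := lam.antitone' i i' h1
    have := lam.antitone' i' (s-1) h2
    omega
  have hconjb : lam.conj b = s := by
    have h1 : lam.conj b ≤ s := conj_le_of_parts_le (le_refl _)
    have h2 : s - 1 < lam.conj b := lt_conj_of_lt_parts (by omega)
    omega
  have hconja1 : lam.conj (a - 1) = s := by
    have h1 : lam.conj (a-1) ≤ s := conj_le_of_parts_le (by omega)
    have h2 : s - 1 < lam.conj (a-1) := lt_conj_of_lt_parts (by omega)
    omega
  refine ⟨i, by omega, hiadd, ?_⟩
  by_contra hfar
  push_neg at hfar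
  -- cdiag i = a - i, cdiag s = b - s ; so (a - b) + (s - i) ≥ k + 2
  have hgap : (a : ℤ) - b + (s - i) ≥ k + 2 := by
    unfold cdiag at hfar
    rw [hpi, ← hb] at hfar
    omega
  set g := a - b with hg
  set h := s - i with hh
  have hgh : g + h ≥ k + 2 := by omega
  have hh1 : 1 ≤ h := by omega
  have hg1 : 1 ≤ g := by omega
  by_cases hcase : h ≥ k + 1
  · -- rsk contradiction : rsk lam i = 0 but rsk lam (s-1) ≥ 1
    have hrski : rsk k lam i = 0 := by
      rw [rsk_eq, Set.ncard_eq_zero (rsk_set_finite k lam i)]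
      ext j; simp only [Set.mem_setOf_eq, Set.mem_empty_iff_false, iff_false]
      rintro ⟨hmem, hhook⟩
      have hja : j < a := by rw [← hpi]; exact hmem
      have hcj : s ≤ lam.conj j := by
        have : s - 1 < lam.conj j := lt_conj_of_lt_parts (by omega)
        omega
      have : lam.hook i j = (a - j) + (lam.conj j - i) - 1 := by
        rw [YPartition.hook, hpi]
      omega
    have hrsks : 1 ≤ rsk k lam (s-1) := by
      rw [rsk_eq]
      have hmem : (a - 1 : ℕ) ∈ {j : ℕ | lam.Mem (s-1, j) ∧ lam.hook (s-1) j ≤ k} := by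
        constructor
        · show a - 1 < lam.parts (s-1); omega
        · show lam.hook (s-1) (a-1) ≤ k
          rw [YPartition.hook, hconja1]
          omega
      have := (Set.ncard_pos (rsk_set_finite k lam (s-1))).mpr ⟨_, hmem⟩
      omega
    have := hsh.1 i (s-1) (by omega)
    omega
  · -- h ≤ k, so g ≥ 2 ; csk contradiction
    push_neg at hcase
    have hcsk1 : h ≤ csk k lam (a-1) := by
      rw [csk_eq]
      have hsub : Set.Ico i s ⊆ {i' : ℕ | lam.Mem (i', a-1) ∧ lam.hook i' (a-1) ≤ k} := by
        rintro i' ⟨h1, h2⟩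
        have hpi' : lam.parts i' = a := hconst i' h1 (by omega)
        constructor
        · show a - 1 < lam.parts i'; omega
        · show lam.hook i' (a-1) ≤ k
          rw [YPartition.hook, hpi', hconja1]
          omega
      calc h = (Set.Ico i s).ncard := by
            rw [← Finset.coe_Ico, Set.ncard_coe_finset, Nat.card_Ico]
      _ ≤ _ := Set.ncard_le_ncard hsub (csk_set_finite k lam (a-1))
    have hcsk2 : csk k lam b ≤ h - 1 := by
      rw [csk_eq]
      by_cases hgk : g ≥ k + 1
      · -- set empty
        have : {i' : ℕ | lam.Mem (i', b) ∧ lam.hook i' b ≤ k} = ∅ := by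
          ext i'; simp only [Set.mem_setOf_eq, Set.mem_empty_iff_false, iff_false]
          rintro ⟨hmem, hhook⟩
          have hi's : i' < s := by
            have := lt_conj_of_lt_parts (lam := lam) (show b < lam.parts i' from hmem)
            omega
          have hpge : a ≤ lam.parts i' := by
            have := lam.antitone' i' (s-1) (by omega)
            omega
          have : lam.hook i' b = (lam.parts i' - b) + (lam.conj b - i') - 1 := rfl
          rw [hconjb] at this
          omega
        rw [this]; simp
      · push_neg at hgk
        have hsub : {i' : ℕ | lam.Mem (i', b) ∧ lam.hook i' b ≤ k} ⊆
            Set.Icc (s - 1 - (k - g)) (s-1) := by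
          rintro i' ⟨hmem, hhook⟩
          have hi's : i' < s := by
            have := lt_conj_of_lt_parts (lam := lam) (show b < lam.parts i' from hmem)
            omega
          have hpge : a ≤ lam.parts i' := by
            have := lam.antitone' i' (s-1) (by omega)
            omega
          have heq : lam.hook i' b = (lam.parts i' - b) + (lam.conj b - i') - 1 := rfl
          rw [hconjb] at heq
          constructor <;> omega
        calc {i' : ℕ | lam.Mem (i', b) ∧ lam.hook i' b ≤ k}.ncard
            ≤ (Set.Icc (s - 1 - (k - g)) (s-1)).ncard :=
              Set.ncard_le_ncard hsub (Set.finite_Icc _ _)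
          _ ≤ h - 1 := by
              rw [← Finset.coe_Icc, Set.ncard_coe_finset, Nat.card_Icc]
              omega
    have := hsh.2 b (a-1) (by omega)
    omega

/-- every addable row `s ≥ 1` of a k-shape has a (unique) chain successor -/
lemma succ_exists {k : ℕ} {lam : YPartition} (hk : 1 ≤ k) (hsh : IsKShape k lam)
    {s : ℕ} (hs : HasAddable lam s) (hs1 : 1 ≤ s) :
    ∃ s', KConnectedBelow k lam s s' := by
  classical
  obtain ⟨i, hi, hiadd, hidist⟩ := exists_candidate hk hsh hs hs1
  have hex : ∃ m, m < s ∧ HasAddable lam m ∧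
      cellDist (addCorner lam s) (addCorner lam m) ≤ k + 1 := by
    refine ⟨i, hi, hiadd, ?_⟩
    have := cellDist_corner_eq hs hiadd hi
    omega
  obtain ⟨hm1, hm2, hm3⟩ := Nat.find_spec hex
  refine ⟨Nat.find hex, hm1, hs, hm2, hm3, ?_⟩
  intro r'' hr'' hadd hdist
  exact Nat.find_min hex hr'' ⟨by omega, hadd, hdist⟩

end KShapeAux
namespace KShapeAux

open YPartition

/-- Data extracted from a cover `lam ⋖ mu`. -/
structure CovData (k : ℕ) (lam mu : YPartition) : Type where
  ℓ : ℕ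
  ρ : ℕ → ℕ
  one_le : 1 ≤ ℓ
  mono : ∀ ⦃t t'⦄, t < t' → t' < ℓ → ρ t' < ρ t
  mem : ∀ x, lam.parts x < mu.parts x ↔ ∃ t, t < ℓ ∧ ρ t = x
  plus1 : ∀ x, lam.parts x < mu.parts x → mu.parts x = lam.parts x + 1
  le : ∀ x, lam.parts x ≤ mu.parts x
  add : ∀ t, t < ℓ → HasAddable lam (ρ t)
  gap : ∀ t, t + 1 < ℓ →
    cdiag lam (ρ t) + k ≤ cdiag lam (ρ (t+1)) ∧
    cdiag lam (ρ (t+1)) ≤ cdiag lam (ρ t) + (k+1)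

lemma exists_covData {k : ℕ} {lam mu : YPartition} (hk : 2 ≤ k)
    (hcov : IsCover k lam mu) : Nonempty (CovData k lam mu) := by
  obtain ⟨hsh1, hsh2, ℓ, a, hℓ, ⟨hle, hskew, hinj, hstep⟩, _, _⟩ := hcov
  set ρ : ℕ → ℕ := fun t => (a t).1 with hρ
  -- strict monotonicity
  have mono : ∀ ⦃t t'⦄, t < t' → t' < ℓ → ρ t' < ρ t := by
    intro t t' h h'
    induction t' with
    | zero => omega
    | succ m ih =>
      have h1 : (a (m+1)).1 < (a m).1 := (hstep m h').1
      rcases Nat.lt_or_ge t m with hm | hm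
      · exact lt_trans h1 (ih hm (by omega))
      · have : t = m := by omega
        subst this; exact h1
  -- skew membership of cells
  have hcell : ∀ t, t < ℓ → lam.parts (ρ t) ≤ (a t).2 ∧ (a t).2 < mu.parts (ρ t) := by
    intro t ht
    have := (hskew (a t)).mpr ⟨t, ht, rfl⟩
    obtain ⟨hmu, hlam⟩ := this
    exact ⟨Nat.le_of_not_lt hlam, hmu⟩
  have hmem : ∀ x, lam.parts x < mu.parts x ↔ ∃ t, t < ℓ ∧ ρ t = x := by
    intro x
    constructor
    · intro hx
      have : (x, lam.parts x) ∈ skewSet lam mu := ⟨hx, by simp [YPartition.Mem]⟩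
      obtain ⟨t, ht, hat⟩ := (hskew _).mp this
      exact ⟨t, ht, by show (a t).1 = x; rw [hat]⟩
    · rintro ⟨t, ht, rfl⟩
      have := hcell t ht
      omega
  -- injectivity of ρ
  have hρinj : ∀ t t', t < ℓ → t' < ℓ → ρ t = ρ t' → t = t' := by
    intro t t' ht ht' he
    rcases Nat.lt_trichotomy t t' with h | h | h
    · have := mono h ht'; omega
    · exact h
    · have := mono h ht; omega
  have hplus1 : ∀ x, lam.parts x < mu.parts x → mu.parts x = lam.parts x + 1 := by
    intro x hx
    by_contra hge
    have h2 : lam.parts x + 1 < mu.parts x := by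
      rcases Nat.lt_or_ge (lam.parts x + 1) (mu.parts x) with h | h
      · exact h
      · exact absurd (by omega) hge
    have hc1 : (x, lam.parts x) ∈ skewSet lam mu :=
      ⟨show lam.parts x < mu.parts x by omega, by simp [YPartition.Mem]⟩
    have hc2 : (x, lam.parts x + 1) ∈ skewSet lam mu :=
      ⟨show lam.parts x + 1 < mu.parts x from h2, by simp [YPartition.Mem]⟩
    obtain ⟨t1, ht1, hat1⟩ := (hskew _).mp hc1
    obtain ⟨t2, ht2, hat2⟩ := (hskew _).mp hc2
    have hne : t1 ≠ t2 := by
      intro h; rw [h, hat2] at hat1; simp at hat1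
    have : ρ t1 = ρ t2 := by rw [hρ]; simp only; rw [hat1, hat2]
    exact hne (hρinj t1 t2 ht1 ht2 this)
  -- second coordinates
  have hsnd : ∀ t, t < ℓ → a t = addCorner lam (ρ t) := by
    intro t ht
    have h1 := hcell t ht
    have h2 := hplus1 (ρ t) (by omega)
    have : (a t).2 = lam.parts (ρ t) := by omega
    rw [addCorner, ← this]
  -- diagonal gaps
  have hgap : ∀ t, t + 1 < ℓ →
      cdiag lam (ρ t) + k ≤ cdiag lam (ρ (t+1)) ∧
      cdiag lam (ρ (t+1)) ≤ cdiag lam (ρ t) + (k+1) := by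
    intro t ht
    have hcont := (hstep t ht).2
    have hrow : ρ (t+1) < ρ t := (hstep t ht).1
    have hpar : lam.parts (ρ t) ≤ lam.parts (ρ (t+1)) :=
      lam.antitone' _ _ (le_of_lt hrow)
    have hdd : diagIdx (a t) = cdiag lam (ρ t) := by
      rw [hsnd t (by omega)]; rfl
    have hdd2 : diagIdx (a (t+1)) = cdiag lam (ρ (t+1)) := by
      rw [hsnd (t+1) ht]; rfl
    have hpos : cdiag lam (ρ t) < cdiag lam (ρ (t+1)) := by
      unfold cdiag
      have : (lam.parts (ρ t) : ℤ) ≤ (lam.parts (ρ (t+1)) : ℤ) := by exact_mod_cast hpar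
      have : (ρ (t+1) : ℤ) < (ρ t : ℤ) := by exact_mod_cast hrow
      omega
    rcases hcont with hc | hc <;>
    · unfold cellDist at hc
      rw [hdd, hdd2] at hc
      omega
  have hadd : ∀ t, t < ℓ → HasAddable lam (ρ t) := by
    intro t ht
    rcases Nat.eq_zero_or_pos (ρ t) with h0 | h0
    · exact Or.inl h0
    · right
      by_contra hc
      push_neg at hc
      have heq : lam.parts (ρ t - 1) = lam.parts (ρ t) :=
        le_antisymm hc (lam.antitone' _ _ (by omega))
      -- then row (ρ t - 1) is also a cover row
      have hmem2 : lam.parts (ρ t - 1) < mu.parts (ρ t - 1) := by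
        have h1 : mu.parts (ρ t) ≤ mu.parts (ρ t - 1) := mu.antitone' _ _ (by omega)
        have h2 : mu.parts (ρ t) = lam.parts (ρ t) + 1 := hplus1 _ ((hmem (ρ t)).mpr ⟨t, ht, rfl⟩)
        omega
      obtain ⟨t'', ht'', he⟩ := (hmem _).mp hmem2
      have htlt : t < t'' := by
        have h1 : ρ t'' < ρ t := by omega
        rcases Nat.lt_trichotomy t t'' with h | h | h
        · exact h
        · subst h; omega
        · have := mono h ht; omega
      have ht1 : t'' = t + 1 := by
        by_contra hne
        have h2 : t + 1 < t'' := by omega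
        have := mono h2 ht''
        have := mono (show t < t+1 by omega) (by omega)
        omega
      subst ht1
      obtain ⟨hg1, _⟩ := hgap t ht''
      have he2 : lam.parts (ρ (t+1)) = lam.parts (ρ t) := by rw [he, heq]
      unfold cdiag at hg1
      rw [he2] at hg1
      have h3 : (ρ (t+1) : ℤ) = (ρ t : ℤ) - 1 := by omega
      rw [h3] at hg1
      omega
  exact ⟨⟨ℓ, ρ, hℓ, mono, hmem, hplus1, hle, hadd, hgap⟩⟩

end KShapeAux
namespace KShapeAux

open YPartition

namespace CovData

variable {k : ℕ} {lam mu : YPartition} (D : CovData k lam mu)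

/-- bottom (lowest-index) cover row -/
def dd : ℕ := D.ρ (D.ℓ - 1)
/-- top (highest-index) cover row -/
def uu : ℕ := D.ρ 0

/-- the set of cover rows -/
def R (_D : CovData k lam mu) : Set ℕ := {x | lam.parts x < mu.parts x}

lemma mono_le {t t' : ℕ} (h : t ≤ t') (h' : t' < D.ℓ) : D.ρ t' ≤ D.ρ t := by
  rcases Nat.eq_or_lt_of_le h with rfl | h
  · exact le_rfl
  · exact le_of_lt (D.mono h h')

lemma dd_le {t : ℕ} (ht : t < D.ℓ) : D.dd ≤ D.ρ t :=
  D.mono_le (by omega) (by omega)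

lemma le_uu {t : ℕ} (ht : t < D.ℓ) : D.ρ t ≤ D.uu :=
  D.mono_le (by omega) ht

lemma dd_le_uu : D.dd ≤ D.uu := D.dd_le (by have := D.one_le; omega)

lemma rho_memR {t : ℕ} (ht : t < D.ℓ) : D.ρ t ∈ D.R :=
  (D.mem _).mpr ⟨t, ht, rfl⟩

lemma dd_memR : D.dd ∈ D.R := D.rho_memR (by have := D.one_le; omega)

lemma uu_memR : D.uu ∈ D.R := D.rho_memR (by have := D.one_le; omega)

lemma memR_le_uu {x : ℕ} (hx : x ∈ D.R) : x ≤ D.uu := by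
  obtain ⟨t, ht, rfl⟩ := (D.mem x).mp hx
  exact D.le_uu ht

lemma dd_le_memR {x : ℕ} (hx : x ∈ D.R) : D.dd ≤ x := by
  obtain ⟨t, ht, rfl⟩ := (D.mem x).mp hx
  exact D.dd_le ht

lemma rowDown_eq : rowDown lam mu = D.dd := by
  have hne : {i : ℕ | lam.parts i < mu.parts i}.Nonempty := ⟨D.dd, D.dd_memR⟩
  apply le_antisymm
  · exact Nat.sInf_le D.dd_memR
  · have := Nat.sInf_mem hne
    exact D.dd_le_memR this

lemma rowUp_eq : rowUp lam mu = D.uu := by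
  have hbdd : BddAbove {i : ℕ | lam.parts i < mu.parts i} :=
    ⟨D.uu, fun x hx => D.memR_le_uu hx⟩
  apply le_antisymm
  · exact csSup_le ⟨D.dd, D.dd_memR⟩ (fun x hx => D.memR_le_uu hx)
  · exact le_csSup hbdd D.uu_memR

lemma kcb {t : ℕ} (ht : t + 1 < D.ℓ) :
    KConnectedBelow k lam (D.ρ t) (D.ρ (t+1)) := by
  have hrow : D.ρ (t+1) < D.ρ t := D.mono (by omega) ht
  have ha1 := D.add t (by omega)
  have ha2 := D.add (t+1) ht
  obtain ⟨hg1, hg2⟩ := D.gap t ht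
  refine ⟨hrow, ha1, ha2, ?_, ?_⟩
  · have := cellDist_corner_eq ha1 ha2 hrow
    omega
  · intro r'' hr'' hadd'' hdist
    have h1 : cdiag lam (D.ρ (t+1)) + 2 ≤ cdiag lam r'' :=
      cdiag_add_two_le ha2 hadd'' hr''
    have h2 := cellDist_corner_eq ha1 hadd'' (lt_trans hr'' hrow)
    omega

lemma chain_rho : ∀ t, t < D.ℓ → InChain k lam D.uu (D.ρ t) := by
  intro t
  induction t with
  | zero => intro _; exact InChain.refl
  | succ m ih =>
    intro ht
    exact InChain.step (ih (by omega)) (D.kcb ht)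

lemma chain_memR {x : ℕ} (h : InChain k lam D.uu x) (hx : D.dd < x) : x ∈ D.R := by
  induction h with
  | refl => exact D.uu_memR
  | @step p q hp hkcb ih =>
    have hqp : q < p := hkcb.1
    have hpR : p ∈ D.R := ih (by omega)
    obtain ⟨t, ht, rfl⟩ := (D.mem p).mp hpR
    have htne : t ≠ D.ℓ - 1 := by
      intro he
      have : D.ρ t = D.dd := by rw [he]; rfl
      omega
    have ht1 : t + 1 < D.ℓ := by have := D.one_le; omega
    have := kcb_unique hkcb (D.kcb ht1)
    subst this
    exact D.rho_memR ht1

lemma chain_of_memR {x : ℕ} (hx : x ∈ D.R) : InChain k lam D.uu x := by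
  obtain ⟨t, ht, rfl⟩ := (D.mem x).mp hx
  exact D.chain_rho t ht

lemma R_eq_image : D.R = D.ρ '' Set.Iio D.ℓ := by
  ext x
  constructor
  · intro hx
    obtain ⟨t, ht, rfl⟩ := (D.mem x).mp hx
    exact ⟨t, ht, rfl⟩
  · rintro ⟨t, ht, rfl⟩
    exact D.rho_memR ht

lemma R_finite : D.R.Finite := by
  rw [D.R_eq_image]
  exact (Set.finite_Iio _).image _

lemma R_ncard : D.R.ncard = D.ℓ := by
  rw [D.R_eq_image]
  rw [Set.ncard_image_of_injOn]
  · rw [← Finset.coe_range]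
    · rw [Set.ncard_coe_finset, Finset.card_range]
  · intro t ht t' ht' he
    rcases Nat.lt_trichotomy t t' with h | h | h
    · have := D.mono h ht'; omega
    · exact h
    · have := D.mono h ht; omega

lemma mem_lam_finite (nu : YPartition) : {b : ℕ × ℕ | nu.Mem b}.Finite := by
  obtain ⟨N, hN⟩ := nu.finite'
  apply Set.Finite.subset ((Set.finite_Iio N).prod (Set.finite_Iio (nu.parts 0)))
  rintro ⟨i, j⟩ hb
  have hb' : j < nu.parts i := hb
  constructor
  · show i < N
    by_contra hc
    rw [hN i (by omega)] at hb'
    omega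
  · show j < nu.parts 0
    have := nu.antitone' 0 i (Nat.zero_le i)
    omega

lemma psize_eq : psize mu = psize lam + D.ℓ := by
  have hsk : {b : ℕ × ℕ | mu.Mem b} =
      {b : ℕ × ℕ | lam.Mem b} ∪ (fun x => (x, lam.parts x)) '' D.R := by
    ext ⟨i, j⟩
    simp only [Set.mem_setOf_eq, Set.mem_union, Set.mem_image]
    constructor
    · intro hmu
      by_cases hl : lam.Mem (i, j)
      · exact Or.inl hl
      · right
        have h1 : lam.parts i ≤ j := Nat.le_of_not_lt hl
        have h2 : j < mu.parts i := hmu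
        have hiR : i ∈ D.R := by show lam.parts i < mu.parts i; omega
        have := D.plus1 i hiR
        refine ⟨i, hiR, ?_⟩
        have : j = lam.parts i := by omega
        rw [this]
    · rintro (hl | ⟨x, hxR, he⟩)
      · show j < mu.parts i
        have : j < lam.parts i := hl
        have := D.le i
        omega
      · have he1 : x = i := congrArg Prod.fst he
        have he2 : lam.parts x = j := congrArg Prod.snd he
        show j < mu.parts i
        have hxR' : lam.parts x < mu.parts x := hxR
        have := D.plus1 x hxR'
        subst he1
        omega
  have hdisj : Disjoint {b : ℕ × ℕ | lam.Mem b} ((fun x => (x, lam.parts x)) '' D.R) := by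
    rw [Set.disjoint_left]
    rintro ⟨i, j⟩ hmem hb
    obtain ⟨x, _, he⟩ := hb
    have he1 : x = i := congrArg Prod.fst he
    have he2 : lam.parts x = j := congrArg Prod.snd he
    have hmem' : j < lam.parts i := hmem
    rw [← he1] at hmem'
    omega
  have himg : ((fun x => (x, lam.parts x)) '' D.R).ncard = D.ℓ := by
    rw [Set.ncard_image_of_injOn, D.R_ncard]
    intro x _ y _ he
    exact congrArg Prod.fst he
  rw [psize, psize, Nat.card_coe_set_eq, Nat.card_coe_set_eq, hsk]
  rw [Set.ncard_union_eq hdisj (mem_lam_finite lam) (D.R_finite.image _)]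
  rw [himg]

end CovData

end KShapeAux
namespace KShapeAux

open YPartition

namespace CovData

variable {k : ℕ} {lam mu : YPartition} (D : CovData k lam mu)

/-- Window of cover rows between the successor and `s`. -/
lemma succ_loc {s s' : ℕ} (hs : HasAddable lam s) (hds : D.dd < s)
    (hkcb : KConnectedBelow k lam s s') :
    (¬(D.dd < s' ∧ s' ≤ D.uu) ∧
      D.R ∩ {x | D.dd < x ∧ x ≤ D.uu ∧ x < s ∧ s' ≤ x} = ∅) ∨
    ((D.dd < s' ∧ s' ≤ D.uu) ∧
      ∃ c, D.R ∩ {x | D.dd < x ∧ x ≤ D.uu ∧ x < s ∧ s' ≤ x} = {c}) := by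
  classical
  obtain ⟨hs'lt, _, hs'add, hdist, hmin⟩ := hkcb
  have hdcast := cellDist_corner_eq hs hs'add hs'lt
  have hone := D.one_le
  by_cases hsu : s ≤ D.uu
  · -- s inside the cover band
    have hex : ∃ t, t < D.ℓ ∧ D.ρ t < s := ⟨D.ℓ - 1, by omega, hds⟩
    obtain ⟨htℓ, htlt⟩ := Nat.find_spec hex
    set t := Nat.find hex with htdef
    have htmin : ∀ t'', t'' < t → s ≤ D.ρ t'' := by
      intro t'' h
      have := Nat.find_min hex h
      push_neg at this
      exact this (by omega)
    have ht0 : t ≠ 0 := by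
      intro h0
      rw [h0] at htlt
      have : D.ρ 0 = D.uu := rfl
      omega
    have htprev : s ≤ D.ρ (t - 1) := htmin (t-1) (by omega)
    have hprevadd : HasAddable lam (D.ρ (t-1)) := D.add _ (by omega)
    have hsdiag : cdiag lam (D.ρ (t-1)) ≤ cdiag lam s := by
      rcases Nat.eq_or_lt_of_le htprev with he | hlt
      · rw [he]
      · have := cdiag_add_two_le hprevadd hs hlt
        omega
    have hgapt : cdiag lam (D.ρ t) ≤ cdiag lam (D.ρ (t-1)) + (k+1) ∧
        cdiag lam (D.ρ (t-1)) + k ≤ cdiag lam (D.ρ t) := by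
      have h := D.gap (t-1) (by omega)
      have he : t - 1 + 1 = t := by omega
      rw [he] at h
      exact ⟨h.2, h.1⟩
    have htadd := D.add t htℓ
    -- ρ t is a successor candidate, hence s' ≤ ρ t
    have hle1 : s' ≤ D.ρ t := by
      by_contra hc
      push_neg at hc
      refine hmin (D.ρ t) hc htadd ?_
      have := cellDist_corner_eq hs htadd htlt
      omega
    by_cases ht1 : t + 1 < D.ℓ
    · -- successor is trapped between consecutive cover rows
      have hgap2 := D.gap t ht1
      have hnextadd := D.add (t+1) ht1
      have hsdiag2 : cdiag lam s + 2 ≤ cdiag lam (D.ρ t) :=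
        cdiag_add_two_le hs htadd htlt
      have hlow : D.ρ (t+1) < s' := by
        by_contra hc
        push_neg at hc
        have hdiag3 : cdiag lam (D.ρ (t+1)) ≤ cdiag lam s' := by
          rcases Nat.eq_or_lt_of_le hc with he | hlt
          · rw [he]
          · have := cdiag_add_two_le hnextadd hs'add hlt
            omega
        omega
      right
      have hcond : D.dd < s' ∧ s' ≤ D.uu := by
        constructor
        · have : D.dd ≤ D.ρ (t+1) := D.dd_le ht1
          omega
        · have : D.ρ t ≤ D.uu := D.le_uu htℓ
          omega
      refine ⟨hcond, D.ρ t, ?_⟩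
      ext x
      simp only [Set.mem_inter_iff, Set.mem_setOf_eq, Set.mem_singleton_iff]
      constructor
      · rintro ⟨hxR, hx1, hx2, hx3, hx4⟩
        obtain ⟨tx, htx, rfl⟩ := (D.mem x).mp hxR
        have h1 : t ≤ tx := by
          by_contra hc
          push_neg at hc
          have := htmin tx hc
          omega
        have h2 : tx < t + 1 := by
          by_contra hc
          push_neg at hc
          have := D.mono_le hc htx
          omega
        have : tx = t := by omega
        rw [this]
      · rintro rfl
        refine ⟨D.rho_memR htℓ, ?_, D.le_uu htℓ, htlt, hle1⟩
        have h1 : D.dd ≤ D.ρ (t+1) := D.dd_le ht1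
        have h2 : D.ρ (t+1) < D.ρ t := D.mono (by omega) ht1
        omega
    · -- t = ℓ - 1, so s' ≤ dd
      have hteq : t = D.ℓ - 1 := by omega
      have hrt : D.ρ t = D.dd := by rw [hteq]; rfl
      left
      constructor
      · rintro ⟨hc, -⟩; omega
      · ext x
        simp only [Set.mem_inter_iff, Set.mem_setOf_eq, Set.mem_empty_iff_false,
          iff_false, not_and]
        rintro hxR hx1 hx2 hx3 hx4
        obtain ⟨tx, htx, rfl⟩ := (D.mem x).mp hxR
        have h1 : t ≤ tx := by
          by_contra hc
          push_neg at hc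
          have := htmin tx hc
          omega
        have := D.mono_le h1 htx
        omega
  · -- s above the band
    push_neg at hsu
    by_cases hl2 : 2 ≤ D.ℓ
    · have h0add := D.add 0 (by omega)
      have h1add := D.add 1 (by omega)
      have hsdiag2 : cdiag lam s + 2 ≤ cdiag lam (D.ρ 0) :=
        cdiag_add_two_le hs h0add hsu
      have hgap2 := D.gap 0 (by omega)
      simp only [Nat.zero_add] at hgap2
      have hlow : D.ρ 1 < s' := by
        by_contra hc
        push_neg at hc
        have hdiag3 : cdiag lam (D.ρ 1) ≤ cdiag lam s' := by
          rcases Nat.eq_or_lt_of_le hc with he | hlt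
          · rw [he]
          · have := cdiag_add_two_le h1add hs'add hlt
            omega
        omega
      have hdds' : D.dd < s' := by
        have : D.dd ≤ D.ρ 1 := D.dd_le (by omega)
        omega
      have hddu : D.dd < D.uu := D.mono (show 0 < D.ℓ - 1 by omega) (by omega)
      by_cases hs'u : s' ≤ D.uu
      · right
        refine ⟨⟨hdds', hs'u⟩, D.uu, ?_⟩
        ext x
        simp only [Set.mem_inter_iff, Set.mem_setOf_eq, Set.mem_singleton_iff]
        constructor
        · rintro ⟨hxR, hx1, hx2, hx3, hx4⟩
          obtain ⟨tx, htx, rfl⟩ := (D.mem x).mp hxR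
          have h2 : tx < 1 := by
            by_contra hc
            push_neg at hc
            have := D.mono_le hc htx
            omega
          have : tx = 0 := by omega
          rw [this]; rfl
        · rintro rfl
          exact ⟨D.uu_memR, hddu, le_rfl, hsu, hs'u⟩
      · left
        refine ⟨by rintro ⟨-, hc⟩; omega, ?_⟩
        ext x
        simp only [Set.mem_inter_iff, Set.mem_setOf_eq, Set.mem_empty_iff_false,
          iff_false, not_and]
        rintro hxR hx1 hx2 hx3 hx4
        omega
    · -- ℓ = 1 : dd = uu, window empty
      have hl1 : D.ℓ = 1 := by omega
      have hddu : D.dd = D.uu := by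
        show D.ρ (D.ℓ - 1) = D.ρ 0
        rw [hl1]
      left
      constructor
      · rintro ⟨hc1, hc2⟩; omega
      · ext x
        simp only [Set.mem_inter_iff, Set.mem_setOf_eq, Set.mem_empty_iff_false,
          iff_false, not_and]
        rintro hxR hx1 hx2 hx3 hx4
        omega

lemma window_finite (s : ℕ) :
    (D.R ∩ {x | D.dd < x ∧ x ≤ D.uu ∧ x < s}).Finite :=
  D.R_finite.subset Set.inter_subset_left

lemma chainWindow_finite (s : ℕ) :
    {x | InChain k lam s x ∧ D.dd < x ∧ x ≤ D.uu ∧ x < s}.Finite :=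
  (Set.finite_Iic s).subset (fun x hx => inChain_le hx.1)

/-- counting step along the chain -/
lemma step_count {s s' : ℕ} (hs : HasAddable lam s) (hds : D.dd < s)
    (hkcb : KConnectedBelow k lam s s') :
    (D.R ∩ {x | D.dd < x ∧ x ≤ D.uu ∧ x < s}).ncard =
      (if D.dd < s' ∧ s' ≤ D.uu then 1 else 0) +
        (D.R ∩ {x | D.dd < x ∧ x ≤ D.uu ∧ x < s'}).ncard := by
  classical
  have hs'lt : s' < s := hkcb.1
  have hsplit : D.R ∩ {x | D.dd < x ∧ x ≤ D.uu ∧ x < s} =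
      (D.R ∩ {x | D.dd < x ∧ x ≤ D.uu ∧ x < s ∧ s' ≤ x}) ∪
      (D.R ∩ {x | D.dd < x ∧ x ≤ D.uu ∧ x < s'}) := by
    ext x
    simp only [Set.mem_inter_iff, Set.mem_setOf_eq, Set.mem_union]
    constructor
    · rintro ⟨hR, h1, h2, h3⟩
      rcases Nat.lt_or_ge x s' with h | h
      · exact Or.inr ⟨hR, h1, h2, h⟩
      · exact Or.inl ⟨hR, h1, h2, h3, h⟩
    · rintro (⟨hR, h1, h2, h3, h4⟩ | ⟨hR, h1, h2, h3⟩)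
      · exact ⟨hR, h1, h2, h3⟩
      · exact ⟨hR, h1, h2, by omega⟩
  have hdisj : Disjoint (D.R ∩ {x | D.dd < x ∧ x ≤ D.uu ∧ x < s ∧ s' ≤ x})
      (D.R ∩ {x | D.dd < x ∧ x ≤ D.uu ∧ x < s'}) := by
    rw [Set.disjoint_left]
    rintro x ⟨-, -, -, -, h4⟩ ⟨-, -, -, h3⟩
    omega
  rw [hsplit, Set.ncard_union_eq hdisj
    (D.R_finite.subset Set.inter_subset_left)
    (D.R_finite.subset Set.inter_subset_left)]
  rcases D.succ_loc hs hds hkcb with ⟨hcond, hM⟩ | ⟨hcond, c, hM⟩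
  · rw [hM, if_neg hcond]
    simp
  · rw [hM, if_pos hcond, Set.ncard_singleton]

/-- THE counting lemma: the chain from `s` meets the window `(dd, uu]` in as many
rows as the cover does. -/
lemma chain_count (hk : 2 ≤ k) (hsh : IsKShape k lam) :
    ∀ s, HasAddable lam s → D.dd < s →
    {x | InChain k lam s x ∧ D.dd < x ∧ x ≤ D.uu ∧ x < s}.ncard =
      (D.R ∩ {x | D.dd < x ∧ x ≤ D.uu ∧ x < s}).ncard := by
  intro s
  induction s using Nat.strong_induction_on with
  | _ s IH =>
  intro hs hds
  obtain ⟨s', hkcb⟩ := succ_exists (by omega) hsh hs (by omega)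
  have hs'lt : s' < s := hkcb.1
  have hC : {x | InChain k lam s x ∧ D.dd < x ∧ x ≤ D.uu ∧ x < s} =
      (if D.dd < s' ∧ s' ≤ D.uu then ({s'} : Set ℕ) else ∅) ∪
      {x | InChain k lam s' x ∧ D.dd < x ∧ x ≤ D.uu ∧ x < s'} := by
    classical
    ext x
    simp only [Set.mem_union, Set.mem_setOf_eq]
    constructor
    · rintro ⟨hch, h1, h2, h3⟩
      rcases inChain_first hch with rfl | ⟨z, hz, hch'⟩
      · omega
      · have hz' := kcb_unique hkcb hz
        subst hz'
        rcases eq_or_ne x s' with rfl | hne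
        · left
          rw [if_pos ⟨h1, h2⟩]
          exact rfl
        · right
          exact ⟨hch', h1, h2, lt_of_le_of_ne (inChain_le hch') hne⟩
    · rintro (hx | ⟨hch, h1, h2, h3⟩)
      · by_cases hcond : D.dd < s' ∧ s' ≤ D.uu
        · rw [if_pos hcond] at hx
          have : x = s' := hx
          subst this
          exact ⟨InChain.step InChain.refl hkcb, hcond.1, hcond.2, hs'lt⟩
        · rw [if_neg hcond] at hx
          exact absurd hx (Set.notMem_empty x)
      · exact ⟨inChain_trans (InChain.step InChain.refl hkcb) hch, h1, h2, by omega⟩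
  have hdisj : Disjoint (if D.dd < s' ∧ s' ≤ D.uu then ({s'} : Set ℕ) else ∅)
      {x | InChain k lam s' x ∧ D.dd < x ∧ x ≤ D.uu ∧ x < s'} := by
    classical
    rw [Set.disjoint_left]
    intro x hx hx2
    split_ifs at hx with h
    · have : x = s' := hx
      subst this
      exact absurd hx2.2.2.2 (lt_irrefl _)
    · exact absurd hx (Set.notMem_empty x)
  have hiffin : (if D.dd < s' ∧ s' ≤ D.uu then ({s'} : Set ℕ) else ∅).Finite := by
    classical
    split_ifs
    · exact Set.finite_singleton _
    · exact Set.finite_empty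
  have hCcard : {x | InChain k lam s x ∧ D.dd < x ∧ x ≤ D.uu ∧ x < s}.ncard =
      (if D.dd < s' ∧ s' ≤ D.uu then 1 else 0) +
        {x | InChain k lam s' x ∧ D.dd < x ∧ x ≤ D.uu ∧ x < s'}.ncard := by
    classical
    rw [hC, Set.ncard_union_eq hdisj hiffin (D.chainWindow_finite s')]
    congr 1
    split_ifs
    · exact Set.ncard_singleton _
    · exact Set.ncard_empty _
  rw [hCcard, D.step_count hs hds hkcb]
  congr 1
  by_cases hds' : D.dd < s'
  · exact IH s' hs'lt hkcb.2.2.1 hds'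
  · push_neg at hds'
    have h1 : {x | InChain k lam s' x ∧ D.dd < x ∧ x ≤ D.uu ∧ x < s'} = ∅ := by
      ext x
      simp only [Set.mem_setOf_eq, Set.mem_empty_iff_false, iff_false, not_and]
      intro _ h1 _ h3
      omega
    have h2 : D.R ∩ {x | D.dd < x ∧ x ≤ D.uu ∧ x < s'} = ∅ := by
      ext x
      simp only [Set.mem_inter_iff, Set.mem_setOf_eq, Set.mem_empty_iff_false,
        iff_false, not_and]
      intro _ h1
      omega
    rw [h1, h2]

end CovData

end KShapeAux
namespace KShapeAux

open YPartition

lemma iCC_tt (k : ℕ) (lam : YPartition) (top bot : ℕ) :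
    iCC k lam top bot true true = {s | InChain k lam top s ∧ bot ≤ s}.ncard := by
  rw [iCC, Nat.card_coe_set_eq]
  congr 1
  ext s
  simp

lemma iCC_ff (k : ℕ) (lam : YPartition) (top bot : ℕ) :
    iCC k lam top bot false false =
      {s | InChain k lam top s ∧ bot < s ∧ s ≠ top}.ncard := by
  rw [iCC, Nat.card_coe_set_eq]
  congr 1
  ext s
  simp [and_assoc]

namespace CovData

variable {k : ℕ} {lam mu : YPartition} (D : CovData k lam mu)

/-- the row just above the bottom cover row is addable in `mu` -/
lemma next_addable (hk : 2 ≤ k) : HasAddable mu (D.dd + 1) := by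
  right
  simp only [Nat.add_sub_cancel]
  have hddR := D.dd_memR
  have hplusd := D.plus1 D.dd hddR
  by_cases hR : lam.parts (D.dd + 1) < mu.parts (D.dd + 1)
  · obtain ⟨s, hsℓ, hes⟩ := (D.mem _).mp hR
    have hone := D.one_le
    have hsne : s ≠ D.ℓ - 1 := by
      intro he
      have : D.ρ s = D.dd := by rw [he]; rfl
      omega
    have hs1 : s + 1 < D.ℓ := by omega
    have hnext : D.ρ (s+1) = D.dd := by
      have h1 : D.ρ (s+1) < D.ρ s := D.mono (by omega) hs1
      have h2 : D.dd ≤ D.ρ (s+1) := D.dd_le hs1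
      omega
    have hgap := (D.gap s hs1).1
    rw [hes, hnext] at hgap
    unfold cdiag at hgap
    have hplus := D.plus1 _ hR
    have hcast : (lam.parts (D.dd + 1) : ℤ) + k ≤ (lam.parts D.dd : ℤ) + 1 := by
      push_cast at hgap ⊢
      omega
    have : lam.parts (D.dd + 1) + k ≤ lam.parts D.dd + 1 := by exact_mod_cast hcast
    omega
  · push_neg at hR
    have h1 : mu.parts (D.dd + 1) = lam.parts (D.dd + 1) :=
      le_antisymm hR (D.le _)
    have h2 : lam.parts (D.dd + 1) ≤ lam.parts D.dd := lam.antitone' _ _ (by omega)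
    omega

/-- chain from the top cover row, above the bottom cover row, is the cover -/
lemma chain_above : {s : ℕ | InChain k lam D.uu s ∧ D.dd < s} =
    D.R ∩ {x | D.dd < x} := by
  ext x
  simp only [Set.mem_setOf_eq, Set.mem_inter_iff]
  exact ⟨fun ⟨h1, h2⟩ => ⟨D.chain_memR h1 h2, h2⟩,
    fun ⟨h1, h2⟩ => ⟨D.chain_of_memR h1, h2⟩⟩

lemma window_count : (D.R ∩ {x | D.dd < x}).ncard = D.ℓ - 1 := by
  have he : D.R ∩ {x | D.dd < x} = D.R \ {D.dd} := by
    ext x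
    simp only [Set.mem_inter_iff, Set.mem_setOf_eq, Set.mem_diff,
      Set.mem_singleton_iff]
    constructor
    · rintro ⟨h1, h2⟩; exact ⟨h1, by omega⟩
    · rintro ⟨h1, h2⟩
      have := D.dd_le_memR h1
      exact ⟨h1, by omega⟩
  rw [he]
  have := Set.ncard_diff_singleton_add_one D.dd_memR D.R_finite
  rw [D.R_ncard] at this
  omega

end CovData

end KShapeAux
open KShapeAux in
/-- moving (n+1)↓ to the position of (n+1)↑ raises the cocharge
of the letter n+1 by |c_{n+1}| - 1. -/
theorem cocharge_shift_up (k N : ℕ) (hk : 2 ≤ k) (T : ℕ → YPartition)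
    (hT : StdKShapeTableau k N T) (n : ℕ) (hn : 1 ≤ n) (hnN : n + 1 ≤ N) :
    cochargeStepVal k (T n) (rowDown (T (n - 1)) (T n) + 1) (rowUp (T n) (T (n + 1))) -
      cochargeStepVal k (T n) (rowDown (T (n - 1)) (T n) + 1)
        (rowDown (T n) (T (n + 1))) =
    (psize (T (n + 1)) : ℤ) - (psize (T n) : ℤ) - 1 := by
  classical
  obtain ⟨hT0, hcovs⟩ := hT
  have hcov2 : IsCover k (T n) (T (n+1)) := hcovs n (by omega)
  have hcov1' : IsCover k (T (n-1)) (T (n-1+1)) := hcovs (n-1) (by omega)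
  have hn1 : n - 1 + 1 = n := by omega
  rw [hn1] at hcov1'
  obtain ⟨D1⟩ := exists_covData hk hcov1'
  obtain ⟨D2⟩ := exists_covData hk hcov2
  have hsh : IsKShape k (T n) := hcov2.1
  have hone := D2.one_le
  have hpsize := D2.psize_eq
  have hdu : D2.dd ≤ D2.uu := D2.dd_le_uu
  rw [D1.rowDown_eq, D2.rowDown_eq, D2.rowUp_eq]
  set r : ℕ := D1.dd + 1 with hrdef
  have hradd : HasAddable (T n) r := D1.next_addable hk
  have hchainud : InChain k (T n) D2.uu D2.dd := D2.chain_rho (D2.ℓ - 1) (by omega)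
  have hRHS : (psize (T (n+1)) : ℤ) - (psize (T n)) - 1 = (D2.ℓ : ℤ) - 1 := by
    rw [hpsize]; push_cast; ring
  rw [hRHS]
  by_cases hcase1 : r ≤ D2.dd
  · -- CASE (i) : r below the whole cover
    unfold cochargeStepVal
    rw [if_neg (by omega : ¬ D2.uu < r), if_neg (by omega : ¬ D2.dd < r)]
    rw [iCC_tt, iCC_tt]
    have hsplit : {s | InChain k (T n) D2.uu s ∧ r ≤ s} =
        {s | InChain k (T n) D2.dd s ∧ r ≤ s} ∪ (D2.R ∩ {x | D2.dd < x}) := by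
      rw [← D2.chain_above]
      ext s
      simp only [Set.mem_setOf_eq, Set.mem_union]
      constructor
      · rintro ⟨hch, hr⟩
        rcases le_or_gt s D2.dd with h | h
        · exact Or.inl ⟨inChain_of_le hchainud hch h, hr⟩
        · exact Or.inr ⟨hch, h⟩
      · rintro (⟨hch, hr⟩ | ⟨hch, h⟩)
        · exact ⟨inChain_trans hchainud hch, hr⟩
        · exact ⟨hch, by omega⟩
    have hdisj : Disjoint {s | InChain k (T n) D2.dd s ∧ r ≤ s}
        (D2.R ∩ {x | D2.dd < x}) := by
      rw [Set.disjoint_left]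
      rintro s ⟨hch, -⟩ ⟨-, h⟩
      have h' : D2.dd < s := h
      have := inChain_le hch
      omega
    have hfin1 : {s | InChain k (T n) D2.dd s ∧ r ≤ s}.Finite :=
      (finite_chain D2.dd).subset (fun s hs => hs.1)
    have hcnt : {s | InChain k (T n) D2.uu s ∧ r ≤ s}.ncard =
        {s | InChain k (T n) D2.dd s ∧ r ≤ s}.ncard + (D2.ℓ - 1) := by
      rw [hsplit, Set.ncard_union_eq hdisj hfin1
        (D2.R_finite.subset Set.inter_subset_left), D2.window_count]
    rw [hcnt]
    push_cast
    omega
  · push_neg at hcase1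
    -- common part for cases (ii) and (iii) : the chain count at r
    have hCr := D2.chain_count hk hsh r hradd hcase1
    have hdropu : D2.R ∩ {x | D2.dd < x ∧ x ≤ D2.uu ∧ x < r} =
        D2.R ∩ {x | D2.dd < x ∧ x < r} := by
      ext x
      simp only [Set.mem_inter_iff, Set.mem_setOf_eq]
      constructor
      · rintro ⟨h1, h2, h3, h4⟩; exact ⟨h1, h2, h4⟩
      · rintro ⟨h1, h2, h3⟩; exact ⟨h1, h2, D2.memR_le_uu h1, h3⟩
    by_cases hcase2 : r ≤ D2.uu
    · -- CASE (ii) : r inside the cover band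
      unfold cochargeStepVal
      rw [if_neg (by omega : ¬ D2.uu < r), if_pos (by omega : D2.dd < r)]
      rw [iCC_tt, iCC_ff]
      have hA : {s | InChain k (T n) D2.uu s ∧ r ≤ s} = D2.R ∩ {x | r ≤ x} := by
        ext s
        simp only [Set.mem_setOf_eq, Set.mem_inter_iff]
        exact ⟨fun ⟨h1, h2⟩ => ⟨D2.chain_memR h1 (by omega), h2⟩,
          fun ⟨h1, h2⟩ => ⟨D2.chain_of_memR h1, h2⟩⟩
      have hB : {s | InChain k (T n) r s ∧ D2.dd < s ∧ s ≠ r} =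
          {x | InChain k (T n) r x ∧ D2.dd < x ∧ x ≤ D2.uu ∧ x < r} := by
        ext s
        simp only [Set.mem_setOf_eq]
        constructor
        · rintro ⟨h1, h2, h3⟩
          have := inChain_le h1
          exact ⟨h1, h2, by omega, by omega⟩
        · rintro ⟨h1, h2, h3, h4⟩
          exact ⟨h1, h2, by omega⟩
      rw [hA, hB, hCr, hdropu]
      have hsplit : D2.R ∩ {x | D2.dd < x} =
          (D2.R ∩ {x | r ≤ x}) ∪ (D2.R ∩ {x | D2.dd < x ∧ x < r}) := by
        ext x
        simp only [Set.mem_inter_iff, Set.mem_setOf_eq, Set.mem_union]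
        constructor
        · rintro ⟨h1, h2⟩
          rcases le_or_gt r x with h | h
          · exact Or.inl ⟨h1, h⟩
          · exact Or.inr ⟨h1, h2, h⟩
        · rintro (⟨h1, h2⟩ | ⟨h1, h2, h3⟩)
          · exact ⟨h1, by omega⟩
          · exact ⟨h1, h2⟩
      have hdisj : Disjoint (D2.R ∩ {x | r ≤ x}) (D2.R ∩ {x | D2.dd < x ∧ x < r}) := by
        rw [Set.disjoint_left]
        rintro x ⟨-, h⟩ ⟨-, -, h'⟩
        have h'' : r ≤ x := h
        omega
      have hsum : (D2.R ∩ {x | r ≤ x}).ncard + (D2.R ∩ {x | D2.dd < x ∧ x < r}).ncard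
          = D2.ℓ - 1 := by
        rw [← D2.window_count, hsplit, Set.ncard_union_eq hdisj
          (D2.R_finite.subset Set.inter_subset_left)
          (D2.R_finite.subset Set.inter_subset_left)]
      push_cast
      omega
    · -- CASE (iii) : r above the cover band
      push_neg at hcase2
      unfold cochargeStepVal
      rw [if_pos (by omega : D2.uu < r), if_pos (by omega : D2.dd < r)]
      rw [iCC_ff, iCC_ff]
      have hY : {s | InChain k (T n) r s ∧ D2.dd < s ∧ s ≠ r} =
          {s | InChain k (T n) r s ∧ D2.uu < s ∧ s ≠ r} ∪
          {x | InChain k (T n) r x ∧ D2.dd < x ∧ x ≤ D2.uu ∧ x < r} := by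
        ext s
        simp only [Set.mem_setOf_eq, Set.mem_union]
        constructor
        · rintro ⟨h1, h2, h3⟩
          rcases le_or_gt s D2.uu with h | h
          · have := inChain_le h1
            exact Or.inr ⟨h1, h2, h, by omega⟩
          · exact Or.inl ⟨h1, h, h3⟩
        · rintro (⟨h1, h2, h3⟩ | ⟨h1, h2, h3, h4⟩)
          · exact ⟨h1, by omega, h3⟩
          · exact ⟨h1, h2, by omega⟩
      have hdisj : Disjoint {s | InChain k (T n) r s ∧ D2.uu < s ∧ s ≠ r}
          {x | InChain k (T n) r x ∧ D2.dd < x ∧ x ≤ D2.uu ∧ x < r} := by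
        rw [Set.disjoint_left]
        rintro x ⟨-, h, -⟩ ⟨-, -, h', -⟩
        omega
      have hfinX : {s | InChain k (T n) r s ∧ D2.uu < s ∧ s ≠ r}.Finite :=
        (finite_chain r).subset (fun s hs => hs.1)
      have hwin : D2.R ∩ {x | D2.dd < x ∧ x < r} = D2.R ∩ {x | D2.dd < x} := by
        ext x
        simp only [Set.mem_inter_iff, Set.mem_setOf_eq]
        constructor
        · rintro ⟨h1, h2, h3⟩; exact ⟨h1, h2⟩
        · rintro ⟨h1, h2⟩
          have := D2.memR_le_uu h1
          exact ⟨h1, h2, by omega⟩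
      have hcnt : {s | InChain k (T n) r s ∧ D2.dd < s ∧ s ≠ r}.ncard =
          {s | InChain k (T n) r s ∧ D2.uu < s ∧ s ≠ r}.ncard + (D2.ℓ - 1) := by
        rw [hY, Set.ncard_union_eq hdisj hfinX (D2.chainWindow_finite r), hCr,
          hdropu, hwin, D2.window_count]
      rw [hcnt]
      push_cast
      omega
end
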